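/- Koenigs–Poincaré theorem: if λ ∈ ℂ* with |λ| ≠ 1, then every germ of holomorphic diffeomorphism f of (ℂ,0) with f'(0)=λ is holomorphically linearizable, i.e. there exists a convergent power series h tangent to the identity with f∘h = h∘R_λ where R_λ(z)=λz. -/

import Mathlib

open Filter Metric Set Function
open scoped Topology

/-- Quadratic bound: an analytic germ fixing `0` deviates from its linear part
by `O(z^2)`. -/
lemma koenigs_quad_eq (f : ℂ → ℂ) (hf0 : f 0 = 0) (z : ℂ) :
    f z - deriv f 0 * z = z ^ 2 * dslope (dslope f 0) 0 z := by
  rcases eq_or_ne z 0 with rfl | hz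
  · simp [hf0]
  · rw [dslope_of_ne _ hz, slope_def_field, dslope_same, dslope_of_ne _ hz, slope_def_field,
      hf0]
    field_simp
    ring

lemma koenigs_quad_bound {f : ℂ → ℂ} (hf : AnalyticAt ℂ f 0) (hf0 : f 0 = 0) :
    ∃ M > (0 : ℝ), ∀ᶠ z in 𝓝 (0 : ℂ), ‖f z - deriv f 0 * z‖ ≤ M * ‖z‖ ^ 2 := by
  obtain ⟨p, hp⟩ := hf
  have h2 := (hp.has_fpower_series_dslope_fslope).has_fpower_series_dslope_fslope
  set ψ : ℂ → ℂ := dslope (dslope f 0) 0 with hψ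
  have hcont : ContinuousAt ψ 0 := h2.analyticAt.continuousAt
  refine ⟨‖ψ 0‖ + 1, by positivity, ?_⟩
  have hev : ∀ᶠ z in 𝓝 (0 : ℂ), ‖ψ z‖ < ‖ψ 0‖ + 1 :=
    (hcont.norm.tendsto).eventually_lt_const (by linarith)
  filter_upwards [hev] with z hzb
  rw [koenigs_quad_eq f hf0 z]
  rw [norm_mul, norm_pow]
  have : (0:ℝ) ≤ ‖z‖ ^ 2 := by positivity
  nlinarith [norm_nonneg z, hzb.le]

/-- Analytic local inverse. -/
lemma koenigs_local_inverse {g : ℂ → ℂ} (hg : AnalyticAt ℂ g 0) (hg0 : g 0 = 0)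
    (hg1 : deriv g 0 ≠ 0) :
    ∃ h : ℂ → ℂ, AnalyticAt ℂ h 0 ∧ h 0 = 0 ∧ deriv h 0 = (deriv g 0)⁻¹ ∧
      (∀ᶠ z in 𝓝 (0 : ℂ), g (h z) = z) ∧ (∀ᶠ z in 𝓝 (0 : ℂ), h (g z) = z) := by
  have hs : HasStrictDerivAt g (deriv g 0) 0 := by
    obtain ⟨p, hp⟩ := hg
    have h1 := hp.hasStrictDerivAt
    have h2 : deriv g 0 = p.coeff 1 := h1.hasDerivAt.deriv
    rwa [h2]
  have hF := hs.hasStrictFDerivAt_equiv hg1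
  set h : ℂ → ℂ := hF.localInverse g _ 0 with hh
  have hh0 : h 0 = 0 := by
    have := hF.localInverse_apply_image
    rwa [hg0] at this
  have hright : ∀ᶠ z in 𝓝 (0 : ℂ), g (h z) = z := by
    have := hF.eventually_right_inverse
    rwa [hg0] at this
  have hleft : ∀ᶠ z in 𝓝 (0 : ℂ), h (g z) = z := hF.eventually_left_inverse
  have hder : deriv h 0 = (deriv g 0)⁻¹ := by
    have := hs.to_localInverse (hf' := hg1)
    rw [hg0] at this
    exact this.hasDerivAt.deriv
  have han : AnalyticAt ℂ h 0 := by
    have htar : (0 : ℂ) ∈ (hF.toOpenPartialHomeomorph g).target := by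
      have := hF.image_mem_toOpenPartialHomeomorph_target
      rwa [hg0] at this
    have hsymm0 : (hF.toOpenPartialHomeomorph g).symm 0 = 0 := hh0
    have hAcoe : AnalyticAt ℂ (hF.toOpenPartialHomeomorph g)
        ((hF.toOpenPartialHomeomorph g).symm 0) := by
      rw [hsymm0]
      simpa [hF.toOpenPartialHomeomorph_coe] using hg
    have hfder : fderiv ℂ (hF.toOpenPartialHomeomorph g) ((hF.toOpenPartialHomeomorph g).symm 0)
        = (ContinuousLinearEquiv.unitsEquivAut ℂ (Units.mk0 (deriv g 0) hg1) :
            ℂ ≃L[ℂ] ℂ) := by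
      rw [hsymm0]
      simpa [hF.toOpenPartialHomeomorph_coe] using hF.hasFDerivAt.fderiv
    exact (hF.toOpenPartialHomeomorph g).analyticAt_symm htar hAcoe hfder
  exact ⟨h, han, hh0, hder, hright, hleft⟩

set_option maxHeartbeats 1600000 in
/-- Koenigs coordinate for a contracting germ: `g ∘ f = λ · g`. -/
lemma koenigs_contract (lam : ℂ) (h0 : lam ≠ 0) (hlt : ‖lam‖ < 1)
    (f : ℂ → ℂ) (hf : AnalyticAt ℂ f 0) (hf0 : f 0 = 0) (hf1 : deriv f 0 = lam) :
    ∃ g : ℂ → ℂ, AnalyticAt ℂ g 0 ∧ g 0 = 0 ∧ deriv g 0 = 1 ∧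
      ∀ᶠ z in 𝓝 (0 : ℂ), g (f z) = lam * g z := by
  have hlam_pos : (0 : ℝ) < ‖lam‖ := norm_pos_iff.mpr h0
  obtain ⟨M, hM, hquad⟩ := koenigs_quad_bound hf hf0
  rw [hf1] at hquad
  -- choose `c` with `‖lam‖ < c < 1` and `c ^ 2 < ‖lam‖`
  set s : ℝ := Real.sqrt ‖lam‖ with hs
  have hs0 : 0 < s := Real.sqrt_pos.mpr hlam_pos
  have hss : s * s = ‖lam‖ := Real.mul_self_sqrt hlam_pos.le
  have hs1 : s < 1 := by nlinarith
  have hlams : ‖lam‖ < s := by nlinarith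
  set c : ℝ := (‖lam‖ + s) / 2 with hc
  have hca : ‖lam‖ < c := by simp only [hc]; linarith
  have hcs : c < s := by simp only [hc]; linarith
  have hc0 : 0 < c := lt_trans hlam_pos hca
  have hc1 : c < 1 := lt_trans hcs hs1
  have hc2 : c ^ 2 < ‖lam‖ := by nlinarith
  -- choose radius r
  obtain ⟨e, he, hball⟩ :=
    Metric.eventually_nhds_iff_ball.mp (hquad.and hf.eventually_analyticAt)
  set r : ℝ := min (e / 2) ((c - ‖lam‖) / M) with hr
  have hr0 : 0 < r := lt_min (by linarith) (by apply div_pos <;> linarith)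
  have hrball : ∀ z ∈ closedBall (0 : ℂ) r,
      (‖f z - lam * z‖ ≤ M * ‖z‖ ^ 2 ∧ AnalyticAt ℂ f z) := by
    intro z hz
    apply hball
    simp only [mem_closedBall, dist_zero_right] at hz
    simp only [mem_ball, dist_zero_right]
    calc ‖z‖ ≤ r := hz
      _ ≤ e / 2 := min_le_left _ _
      _ < e := by linarith
  have hMr : M * r ≤ c - ‖lam‖ := by
    have : r ≤ (c - ‖lam‖) / M := min_le_right _ _
    calc M * r ≤ M * ((c - ‖lam‖) / M) := by nlinarith
      _ = c - ‖lam‖ := by field_simp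
  have hcontr : ∀ z ∈ closedBall (0 : ℂ) r, ‖f z‖ ≤ c * ‖z‖ := by
    intro z hz
    have h1 := (hrball z hz).1
    have hzr : ‖z‖ ≤ r := by simpa [mem_closedBall, dist_zero_right] using hz
    have : ‖f z‖ ≤ ‖lam * z‖ + ‖f z - lam * z‖ := by
      calc ‖f z‖ = ‖lam * z + (f z - lam * z)‖ := by ring_nf
        _ ≤ ‖lam * z‖ + ‖f z - lam * z‖ := norm_add_le _ _
    rw [norm_mul] at this
    have hMz1 : M * ‖z‖ ≤ c - ‖lam‖ := by
      have : M * ‖z‖ ≤ M * r := by nlinarith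
      linarith
    have hMz : M * ‖z‖ ^ 2 ≤ (c - ‖lam‖) * ‖z‖ := by
      have := mul_le_mul_of_nonneg_right hMz1 (norm_nonneg z)
      nlinarith [norm_nonneg z]
    nlinarith [norm_nonneg z]
  have hmem : ∀ z ∈ closedBall (0 : ℂ) r, f z ∈ closedBall (0 : ℂ) r := by
    intro z hz
    have hzr : ‖z‖ ≤ r := by simpa [mem_closedBall, dist_zero_right] using hz
    have := hcontr z hz
    simp only [mem_closedBall, dist_zero_right]
    nlinarith
  have hiter : ∀ n, ∀ z ∈ closedBall (0 : ℂ) r, ‖f^[n] z‖ ≤ c ^ n * ‖z‖ := by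
    intro n
    induction n with
    | zero => intro z hz; simp
    | succ n ih =>
      intro z hz
      have hzr : ‖z‖ ≤ r := by simpa [mem_closedBall, dist_zero_right] using hz
      have h1 := ih z hz
      have hw : f^[n] z ∈ closedBall (0 : ℂ) r := by
        simp only [mem_closedBall, dist_zero_right]
        calc ‖f^[n] z‖ ≤ c ^ n * ‖z‖ := h1
          _ ≤ 1 * r := by
              apply mul_le_mul _ hzr (norm_nonneg z) zero_le_one
              exact pow_le_one₀ hc0.le hc1.le
          _ = r := one_mul r
      rw [Function.iterate_succ_apply']
      calc ‖f (f^[n] z)‖ ≤ c * ‖f^[n] z‖ := hcontr _ hw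
        _ ≤ c * (c ^ n * ‖z‖) := by nlinarith
        _ = c ^ (n + 1) * ‖z‖ := by ring
  have hitermem : ∀ n, ∀ z ∈ closedBall (0 : ℂ) r, f^[n] z ∈ closedBall (0 : ℂ) r := by
    intro n z hz
    have hzr : ‖z‖ ≤ r := by simpa [mem_closedBall, dist_zero_right] using hz
    have := hiter n z hz
    simp only [mem_closedBall, dist_zero_right]
    calc ‖f^[n] z‖ ≤ c ^ n * ‖z‖ := this
      _ ≤ 1 * r := by
          apply mul_le_mul _ hzr (norm_nonneg z) zero_le_one
          exact pow_le_one₀ hc0.le hc1.le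
      _ = r := one_mul r
  -- the increments
  set d : ℕ → ℂ → ℂ := fun n z => f^[n + 1] z / lam ^ (n + 1) - f^[n] z / lam ^ n with hd
  set u : ℕ → ℝ := fun n => M * r ^ 2 / ‖lam‖ * (c ^ 2 / ‖lam‖) ^ n with hu
  have hbd : ∀ n, ∀ z ∈ closedBall (0 : ℂ) r, ‖d n z‖ ≤ u n := by
    intro n z hz
    have hw : f^[n] z ∈ closedBall (0 : ℂ) r := hitermem n z hz
    have hq := (hrball _ hw).1
    have hiterz := hiter n z hz
    have hzr : ‖z‖ ≤ r := by simpa [mem_closedBall, dist_zero_right] using hz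
    have hlpow : lam ^ (n + 1) ≠ 0 := pow_ne_zero _ h0
    have hval : d n z = (f (f^[n] z) - lam * f^[n] z) / lam ^ (n + 1) := by
      simp only [hd]
      rw [Function.iterate_succ_apply', sub_div]
      congr 1
      rw [pow_succ, mul_comm (lam ^ n) lam, mul_div_mul_left _ _ h0]
    rw [hval, norm_div, norm_pow]
    have hnum : ‖f (f^[n] z) - lam * f^[n] z‖ ≤ M * (c ^ n) ^ 2 * ‖z‖ ^ 2 := by
      calc ‖f (f^[n] z) - lam * f^[n] z‖ ≤ M * ‖f^[n] z‖ ^ 2 := hq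
        _ ≤ M * (c ^ n * ‖z‖) ^ 2 :=
            mul_le_mul_of_nonneg_left
              (pow_le_pow_left₀ (norm_nonneg _) hiterz 2) hM.le
        _ = M * (c ^ n) ^ 2 * ‖z‖ ^ 2 := by ring
    have hpow : (0:ℝ) < ‖lam‖ ^ (n + 1) := pow_pos hlam_pos _
    rw [div_le_iff₀ hpow]
    have hln : (‖lam‖ : ℝ) ≠ 0 := hlam_pos.ne'
    have hlnp : (‖lam‖ : ℝ) ^ n ≠ 0 := pow_ne_zero _ hln
    have hrhs : u n * ‖lam‖ ^ (n + 1) = M * r ^ 2 * (c ^ n) ^ 2 := by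
      have h1 : (c ^ 2 / ‖lam‖) ^ n = (c ^ n) ^ 2 / ‖lam‖ ^ n := by
        rw [div_pow, ← pow_mul, ← pow_mul, Nat.mul_comm]
      have h2 : (‖lam‖ : ℝ) ^ (n + 1) = ‖lam‖ * ‖lam‖ ^ n := pow_succ' _ _
      have h3 : (‖lam‖ * ‖lam‖ ^ n : ℝ) ≠ 0 := mul_ne_zero hln hlnp
      simp only [hu]
      calc M * r ^ 2 / ‖lam‖ * (c ^ 2 / ‖lam‖) ^ n * ‖lam‖ ^ (n + 1)
          = M * r ^ 2 * (c ^ n) ^ 2 * ((‖lam‖ * ‖lam‖ ^ n) / (‖lam‖ * ‖lam‖ ^ n)) := by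
            rw [h1, h2]; ring
        _ = M * r ^ 2 * (c ^ n) ^ 2 := by rw [div_self h3, mul_one]
    rw [hrhs]
    have hz2 : ‖z‖ ^ 2 ≤ r ^ 2 := by nlinarith [norm_nonneg z]
    calc ‖f (f^[n] z) - lam * f^[n] z‖ ≤ M * (c ^ n) ^ 2 * ‖z‖ ^ 2 := hnum
      _ ≤ M * (c ^ n) ^ 2 * r ^ 2 :=
            mul_le_mul_of_nonneg_left hz2 (by positivity)
      _ = M * r ^ 2 * (c ^ n) ^ 2 := by ring
  have hratio : c ^ 2 / ‖lam‖ < 1 := by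
    rw [div_lt_one hlam_pos]; exact hc2
  have hratio0 : (0:ℝ) ≤ c ^ 2 / ‖lam‖ := by positivity
  have hsum : Summable u := (summable_geometric_of_lt_one hratio0 hratio).mul_left _
  have hUnif :
      TendstoUniformlyOn (fun N z => ∑ n ∈ Finset.range N, d n z)
        (fun z => ∑' n, d n z) atTop (closedBall (0 : ℂ) r) :=
    tendstoUniformlyOn_tsum_nat hsum hbd
  set g : ℂ → ℂ := fun z => z + ∑' n, d n z with hg
  set gn : ℕ → ℂ → ℂ := fun n z => z + ∑ k ∈ Finset.range n, d k z with hgn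
  have hgn_eq : ∀ n z, gn n z = f^[n] z / lam ^ n := by
    intro n z
    have htel : ∑ k ∈ Finset.range n, d k z = f^[n] z / lam ^ n - f^[0] z / lam ^ 0 :=
      Finset.sum_range_sub (fun k => f^[k] z / lam ^ k) n
    simp only [hgn, htel]
    simp
  have hUnif' : TendstoUniformlyOn gn g atTop (closedBall (0 : ℂ) r) := by
    have hid : TendstoUniformlyOn (fun (_ : ℕ) (z : ℂ) => z) (fun z => z) atTop
        (closedBall (0 : ℂ) r) := by
      rw [Metric.tendstoUniformlyOn_iff]
      intro ε hε
      filter_upwards with n z _ using by simpa using hε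
    exact hid.add hUnif
  -- differentiability
  have hdiffIter : ∀ n, DifferentiableOn ℂ (fun z => f^[n] z) (ball (0 : ℂ) r) := by
    intro n
    induction n with
    | zero => simp only [Function.iterate_zero, id_eq]; exact differentiableOn_id
    | succ n ih =>
      have : ∀ z ∈ ball (0 : ℂ) r, DifferentiableWithinAt ℂ (fun z => f (f^[n] z))
          (ball (0 : ℂ) r) z := by
        intro z hz
        have hmemz : f^[n] z ∈ closedBall (0 : ℂ) r :=
          hitermem n z (ball_subset_closedBall hz)
        have hfa : DifferentiableAt ℂ f (f^[n] z) :=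
          (hrball _ hmemz).2.differentiableAt
        exact hfa.comp_differentiableWithinAt z (ih z hz)
      intro z hz
      have := this z hz
      simpa [Function.iterate_succ_apply'] using this
  have hgn_diff : ∀ n, DifferentiableOn ℂ (gn n) (ball (0 : ℂ) r) := by
    intro n
    have h1 : DifferentiableOn ℂ (fun z => f^[n] z / lam ^ n) (ball (0 : ℂ) r) :=
      (hdiffIter n).div_const _
    have : gn n = fun z => f^[n] z / lam ^ n := funext (hgn_eq n)
    rw [this]
    exact h1
  have hTLU : TendstoLocallyUniformlyOn gn g atTop (ball (0 : ℂ) r) :=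
    (hUnif'.tendstoLocallyUniformlyOn).mono ball_subset_closedBall
  have hg_diff : DifferentiableOn ℂ g (ball (0 : ℂ) r) :=
    hTLU.differentiableOn (Eventually.of_forall hgn_diff) isOpen_ball
  have h0mem : (0 : ℂ) ∈ ball (0 : ℂ) r := mem_ball_self hr0
  have hg_an : AnalyticAt ℂ g 0 := hg_diff.analyticAt (isOpen_ball.mem_nhds h0mem)
  have hiter0 : ∀ n, f^[n] (0 : ℂ) = 0 := fun n => Function.iterate_fixed hf0 n
  have hg0 : g 0 = 0 := by
    have hd0 : ∀ n, d n (0 : ℂ) = 0 := by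
      intro n
      simp only [hd]
      rw [hiter0, hiter0]
      simp
    simp [hg, hd0, tsum_zero]
  -- derivative at 0
  have hfd : HasDerivAt f lam 0 := by
    have := hf.differentiableAt.hasDerivAt
    rwa [hf1] at this
  have hiter_deriv : ∀ n, HasDerivAt (fun z => f^[n] z) (lam ^ n) 0 := by
    intro n
    induction n with
    | zero => simp only [Function.iterate_zero, id_eq, pow_zero]; exact hasDerivAt_id (0 : ℂ)
    | succ n ih =>
      have hcomp : HasDerivAt (f ∘ fun z => f^[n] z) (lam * lam ^ n) 0 := by
        have hfd' : HasDerivAt f lam (f^[n] 0) := by rwa [hiter0 n]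
        exact hfd'.comp 0 ih
      have : (f ∘ fun z => f^[n] z) = fun z => f^[n + 1] z := by
        funext z; simp [Function.iterate_succ_apply']
      rw [this] at hcomp
      simpa [pow_succ, mul_comm] using hcomp
  have hgn_deriv0 : ∀ n, deriv (gn n) 0 = 1 := by
    intro n
    have h1 : HasDerivAt (fun z => f^[n] z / lam ^ n) (lam ^ n / lam ^ n) 0 :=
      (hiter_deriv n).div_const _
    have h2 : lam ^ n / lam ^ n = 1 := div_self (pow_ne_zero n h0)
    rw [h2] at h1
    have : gn n = fun z => f^[n] z / lam ^ n := funext (hgn_eq n)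
    rw [this]
    exact h1.deriv
  have hderivTLU := hTLU.deriv (Eventually.of_forall hgn_diff) isOpen_ball
  have htends : Tendsto (fun n => deriv (gn n) 0) atTop (𝓝 (deriv g 0)) :=
    hderivTLU.tendsto_at h0mem
  have hg1 : deriv g 0 = 1 := by
    have h1 : Tendsto (fun _ : ℕ => (1 : ℂ)) atTop (𝓝 (deriv g 0)) := by
      have : (fun n => deriv (gn n) 0) = fun _ : ℕ => (1 : ℂ) := funext hgn_deriv0
      rwa [this] at htends
    exact (tendsto_nhds_unique h1 tendsto_const_nhds)
  -- functional equation
  refine ⟨g, hg_an, hg0, hg1, ?_⟩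
  have key : ∀ z ∈ closedBall (0 : ℂ) r, g (f z) = lam * g z := by
    intro z hz
    have hfz := hmem z hz
    have t1 : Tendsto (fun n => gn n (f z)) atTop (𝓝 (g (f z))) := hUnif'.tendsto_at hfz
    have t2 : Tendsto (fun n => gn (n + 1) z) atTop (𝓝 (g z)) :=
      (hUnif'.tendsto_at hz).comp (tendsto_add_atTop_nat 1)
    have heqn : ∀ n, gn n (f z) = lam * gn (n + 1) z := by
      intro n
      rw [hgn_eq, hgn_eq, ← Function.iterate_succ_apply]
      rw [pow_succ]
      field_simp
    have t2' : Tendsto (fun n => lam * gn (n + 1) z) atTop (𝓝 (lam * g z)) :=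
      t2.const_mul lam
    have t1' : Tendsto (fun n => lam * gn (n + 1) z) atTop (𝓝 (g (f z))) := by
      have : (fun n => gn n (f z)) = fun n => lam * gn (n + 1) z := funext heqn
      rwa [this] at t1
    exact tendsto_nhds_unique t1' t2'
  exact eventually_of_mem (closedBall_mem_nhds (0 : ℂ) hr0) key

/-- From a Koenigs coordinate to a linearization. -/
lemma koenigs_linearize (mu : ℂ) (F : ℂ → ℂ) (hFc : ContinuousAt F 0) (hF0 : F 0 = 0)
    (g : ℂ → ℂ) (hg : AnalyticAt ℂ g 0) (hg0 : g 0 = 0) (hg1 : deriv g 0 = 1)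
    (hfeq : ∀ᶠ z in 𝓝 (0 : ℂ), g (F z) = mu * g z) :
    ∃ h : ℂ → ℂ, AnalyticAt ℂ h 0 ∧ h 0 = 0 ∧ deriv h 0 = 1 ∧
      ∀ᶠ z in 𝓝 (0 : ℂ), F (h z) = h (mu * z) := by
  obtain ⟨h, hh, hh0, hh1, hright, hleft⟩ :=
    koenigs_local_inverse hg hg0 (by rw [hg1]; exact one_ne_zero)
  refine ⟨h, hh, hh0, by rw [hh1, hg1, inv_one], ?_⟩
  have hconth : Tendsto h (𝓝 0) (𝓝 0) := by
    have := hh.continuousAt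
    rwa [ContinuousAt, hh0] at this
  have hcFh : Tendsto (fun z => F (h z)) (𝓝 0) (𝓝 0) := by
    have := hFc
    rw [ContinuousAt, hF0] at this
    exact this.comp hconth
  have e1 : ∀ᶠ z in 𝓝 (0 : ℂ), g (F (h z)) = mu * z := by
    filter_upwards [hconth.eventually hfeq, hright] with z hz hz'
    rw [hz, hz']
  have e2 : ∀ᶠ z in 𝓝 (0 : ℂ), h (g (F (h z))) = F (h z) := hcFh.eventually hleft
  filter_upwards [e1, e2] with z hz1 hz2
  rw [← hz2, hz1]

/-- Koenigs–Poincaré theorem: if `|λ| ≠ 1`, `λ ≠ 0`, then every germ of holomorphic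
diffeomorphism of `(ℂ,0)` with linear part `λ` is holomorphically linearizable. -/
theorem stmt3 (lam : ℂ) (h0 : lam ≠ 0) (h1 : ‖lam‖ ≠ 1)
    (f : ℂ → ℂ) (hf : AnalyticAt ℂ f 0) (hf0 : f 0 = 0) (hf1 : deriv f 0 = lam) :
    ∃ h : ℂ → ℂ, AnalyticAt ℂ h 0 ∧ h 0 = 0 ∧ deriv h 0 = 1 ∧
      ∀ᶠ z in nhds (0 : ℂ), f (h z) = h (lam * z) := by
  rcases h1.lt_or_gt with hlt | hgt
  · obtain ⟨g, hg, hg0, hg1, hfeq⟩ := koenigs_contract lam h0 hlt f hf hf0 hf1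
    exact koenigs_linearize lam f hf.continuousAt hf0 g hg hg0 hg1 hfeq
  · -- expanding case: apply the contracting case to a local inverse of f
    have hd0 : deriv f 0 ≠ 0 := by rw [hf1]; exact h0
    obtain ⟨F, hFan, hF0, hF1, hrightF, hleftF⟩ := koenigs_local_inverse hf hf0 hd0
    have hF1' : deriv F 0 = lam⁻¹ := by rw [hF1, hf1]
    have hlam_pos : (0 : ℝ) < ‖lam‖ := norm_pos_iff.mpr h0
    have hlt' : ‖lam⁻¹‖ < 1 := by
      rw [norm_inv]
      rw [inv_lt_one_iff₀]
      right; exact hgt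
    obtain ⟨g, hg, hg0, hg1, hfeq⟩ :=
      koenigs_contract lam⁻¹ (inv_ne_zero h0) hlt' F hFan hF0 hF1'
    obtain ⟨h, hh, hh0, hh1, hP⟩ :=
      koenigs_linearize lam⁻¹ F hFan.continuousAt hF0 g hg hg0 hg1 hfeq
    refine ⟨h, hh, hh0, hh1, ?_⟩
    have hconth : Tendsto h (𝓝 0) (𝓝 0) := by
      have := hh.continuousAt
      rwa [ContinuousAt, hh0] at this
    have hmul : Tendsto (fun z : ℂ => lam * z) (𝓝 0) (𝓝 0) := by
      have : Tendsto (fun z : ℂ => lam * z) (𝓝 0) (𝓝 (lam * 0)) :=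
        (continuous_const.mul continuous_id).tendsto 0
      simpa using this
    have e1 : ∀ᶠ z in 𝓝 (0 : ℂ), F (h (lam * z)) = h z := by
      filter_upwards [hmul.eventually hP] with z hz
      rw [hz]
      congr 1
      field_simp
    have e2 : ∀ᶠ z in 𝓝 (0 : ℂ), f (F (h (lam * z))) = h (lam * z) :=
      ((hconth.comp hmul).eventually hrightF)
    filter_upwards [e1, e2] with z hz1 hz2
    rw [← hz2, hz1]
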